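/- Let A ∈ ℝ^{m×n}, b ∈ ℝ^m, L ∈ ℝ^{s×n} with L having full column rank, and let W_1,…,W_k ∈ ℝ^{m×ℓ} be arbitrary matrices. Write A_i = W_iᵀA and b_i = W_iᵀb. Fix λ > 0 and y_0 ∈ ℝ^n, and define the regularized recursive least squares iterates y_j = y_{j-1} − B_j A_jᵀ(A_j y_{j-1} − b_j) where B_j = (λ LᵀL + Σ_{i=1}^{j} A_iᵀA_i)^{-1}. Then y_k is the unique minimizer of x ↦ Σ_{i=1}^{k} ‖A_i x − b_i‖² + λ‖L(x − y_0)‖². -/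

import Mathlib

open Matrix Finset

private lemma aux_sum_mulVec {n q : ℕ} (t : Finset ℕ) (M : ℕ → Matrix (Fin n) (Fin q) ℝ)
    (x : Fin q → ℝ) : (∑ i ∈ t, M i) *ᵥ x = ∑ i ∈ t, (M i) *ᵥ x := by
  classical
  induction t using Finset.induction_on with
  | empty => simp
  | insert _ _ h ih => simp [Finset.sum_insert h, Matrix.add_mulVec, ih]

private lemma aux_dotProduct_sum {n : ℕ} (t : Finset ℕ) (u : Fin n → ℝ) (v : ℕ → Fin n → ℝ) :
    u ⬝ᵥ (∑ i ∈ t, v i) = ∑ i ∈ t, u ⬝ᵥ v i := by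
  classical
  induction t using Finset.induction_on with
  | empty => simp
  | insert _ _ h ih => simp [Finset.sum_insert h, dotProduct_add, ih]

private lemma aux_self_nonneg {n : ℕ} (v : Fin n → ℝ) : 0 ≤ v ⬝ᵥ v :=
  Finset.sum_nonneg fun i _ => mul_self_nonneg _

private lemma aux_dot_shift {p q : ℕ} (C : Matrix (Fin p) (Fin q) ℝ) (u : Fin q → ℝ)
    (e : Fin p → ℝ) : (C *ᵥ u) ⬝ᵥ e = u ⬝ᵥ (Cᵀ *ᵥ e) := by
  rw [Matrix.dotProduct_mulVec, Matrix.vecMul_transpose]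

private lemma aux_expand {p q : ℕ} (C : Matrix (Fin p) (Fin q) ℝ) (u v : Fin q → ℝ)
    (d : Fin p → ℝ) :
    (C *ᵥ (u + v) - d) ⬝ᵥ (C *ᵥ (u + v) - d) =
      u ⬝ᵥ ((Cᵀ * C) *ᵥ u) + 2 * (u ⬝ᵥ (Cᵀ *ᵥ (C *ᵥ v - d)))
        + (C *ᵥ v - d) ⬝ᵥ (C *ᵥ v - d) := by
  have h1 : C *ᵥ (u + v) - d = C *ᵥ u + (C *ᵥ v - d) := by
    rw [Matrix.mulVec_add]; abel
  have h2 : (C *ᵥ u) ⬝ᵥ (C *ᵥ u) = u ⬝ᵥ ((Cᵀ * C) *ᵥ u) := by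
    rw [← Matrix.mulVec_mulVec, aux_dot_shift]
  rw [h1, dotProduct_add, add_dotProduct, add_dotProduct, h2,
    aux_dot_shift C u (C *ᵥ v - d), dotProduct_comm (C *ᵥ v - d) (C *ᵥ u),
    aux_dot_shift C u (C *ᵥ v - d)]
  ring

/-- the rrls iterate `y k` is the unique minimizer of
`x ↦ Σ_{i=1}^k ‖A_i x − b_i‖² + λ‖L(x − y₀)‖²`. -/
theorem rrls_iterate_is_unique_minimizer
    {m n s ℓ : ℕ} (k : ℕ)
    (A : Matrix (Fin m) (Fin n) ℝ) (b : Fin m → ℝ)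
    (L : Matrix (Fin s) (Fin n) ℝ) (hL : L.rank = n)
    (W : ℕ → Matrix (Fin m) (Fin ℓ) ℝ)
    (Ai : ℕ → Matrix (Fin ℓ) (Fin n) ℝ) (hAi : ∀ i, Ai i = (W i)ᵀ * A)
    (bi : ℕ → Fin ℓ → ℝ) (hbi : ∀ i, bi i = (W i)ᵀ.mulVec b)
    (lam : ℝ) (hlam : 0 < lam) (y0 : Fin n → ℝ)
    (B : ℕ → Matrix (Fin n) (Fin n) ℝ)
    (hB : ∀ j, B j = (lam • (Lᵀ * L) + ∑ i ∈ Finset.range j, (Ai i)ᵀ * Ai i)⁻¹)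
    (y : ℕ → Fin n → ℝ) (hy0 : y 0 = y0)
    (hy : ∀ j, y (j + 1) =
      y j - (B (j + 1)).mulVec ((Ai j)ᵀ.mulVec ((Ai j).mulVec (y j) - bi j)))
    (f : (Fin n → ℝ) → ℝ)
    (hf : ∀ x, f x = (∑ i ∈ Finset.range k, ∑ p, ((Ai i).mulVec x - bi i) p ^ 2)
        + lam * ∑ p, (L.mulVec (x - y0)) p ^ 2) :
    (∀ x, f (y k) ≤ f x) ∧ (∀ x, (∀ z, f x ≤ f z) → x = y k) := by
  classical
  set T : Matrix (Fin n) (Fin n) ℝ := Lᵀ * L with hT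
  set M : ℕ → Matrix (Fin n) (Fin n) ℝ :=
    fun j => lam • T + ∑ i ∈ Finset.range j, (Ai i)ᵀ * Ai i with hM
  -- L has trivial kernel
  have hker : ∀ x : Fin n → ℝ, L *ᵥ x = 0 → x = 0 := by
    have h1 := LinearMap.finrank_range_add_finrank_ker L.mulVecLin
    have h2 : Module.finrank ℝ (Fin n → ℝ) = n := by simp
    rw [h2] at h1
    have h3 : Matrix.rank L = Module.finrank ℝ (LinearMap.range L.mulVecLin) := rfl
    rw [← h3, hL] at h1
    have h4 : Module.finrank ℝ (LinearMap.ker L.mulVecLin) = 0 := by omega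
    have h5 : LinearMap.ker L.mulVecLin = ⊥ := Submodule.finrank_eq_zero.mp h4
    intro x hx
    have hx' : x ∈ LinearMap.ker L.mulVecLin := by
      simp [LinearMap.mem_ker, Matrix.mulVecLin_apply, hx]
    rw [h5] at hx'
    simpa using hx'
  -- LᵀL is positive definite
  have hLTL : T.PosDef := by
    refine Matrix.PosDef.of_dotProduct_mulVec_pos ?_ (fun x hx => ?_)
    · have := Matrix.isHermitian_conjTranspose_mul_self L
      simpa [hT, Matrix.conjTranspose_eq_transpose_of_trivial] using this
    · have hstar : star x = x := by simp
      rw [hstar, hT, ← Matrix.mulVec_mulVec, ← aux_dot_shift]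
      have hLx : L *ᵥ x ≠ 0 := fun h => hx (hker x h)
      exact lt_of_le_of_ne (aux_self_nonneg _)
        (fun h => hLx (dotProduct_self_eq_zero.mp h.symm))
  -- each M j is positive definite
  have hpd : ∀ j, (M j).PosDef := by
    intro j
    rw [hM]
    apply Matrix.PosDef.add_posSemidef
    · refine Matrix.PosDef.of_dotProduct_mulVec_pos ?_ (fun x hx => ?_)
      · have h := hLTL.1
        simpa [Matrix.IsHermitian, Matrix.conjTranspose_smul] using
          congrArg (fun N => lam • N) h
      · rw [Matrix.smul_mulVec, dotProduct_smul, smul_eq_mul]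
        exact mul_pos hlam (hLTL.dotProduct_mulVec_pos hx)
    · refine Finset.sum_induction _ _ (fun a b ha hb => ha.add hb) Matrix.PosSemidef.zero ?_
      intro i _
      have := Matrix.posSemidef_conjTranspose_mul_self (Ai i)
      simpa [Matrix.conjTranspose_eq_transpose_of_trivial] using this
  have hMB : ∀ j, (M j) * B j = 1 := by
    intro j
    rw [hB j, hM]
    exact Matrix.mul_nonsing_inv _
      ((Matrix.isUnit_iff_isUnit_det _).1 (hM ▸ hpd j).isUnit)
  -- normal equations by induction
  have hnorm : ∀ j, (M j) *ᵥ y j = lam • (T *ᵥ y0) + ∑ i ∈ Finset.range j, (Ai i)ᵀ *ᵥ bi i := by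
    intro j
    induction j with
    | zero => simp [hM, hy0, Matrix.add_mulVec, Matrix.smul_mulVec]
    | succ j ih =>
      have key : ∀ w, (M (j+1)) *ᵥ ((B (j+1)) *ᵥ w) = w := by
        intro w
        rw [Matrix.mulVec_mulVec, hMB (j+1), Matrix.one_mulVec]
      have hsplit : M (j+1) = M j + (Ai j)ᵀ * Ai j := by
        simp only [hM, Finset.sum_range_succ]
        abel
      rw [hy j, Matrix.mulVec_sub, key, hsplit, Matrix.add_mulVec, ih, Matrix.mulVec_sub,
        Matrix.mulVec_mulVec, Finset.sum_range_succ]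
      abel
  -- rearranged normal equation
  have hne : ∑ i ∈ Finset.range k, (Ai i)ᵀ *ᵥ ((Ai i) *ᵥ y k - bi i)
      + lam • (T *ᵥ (y k - y0)) = 0 := by
    have h := hnorm k
    rw [hM] at h
    simp only [Matrix.add_mulVec, aux_sum_mulVec, Matrix.smul_mulVec] at h
    funext p
    have hp := congrFun h p
    simp only [Matrix.mulVec_sub, Matrix.mulVec_mulVec, Pi.add_apply, Pi.sub_apply,
      Pi.smul_apply, smul_eq_mul, Finset.sum_apply, Finset.sum_sub_distrib, mul_sub,
      Pi.zero_apply] at hp ⊢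
    linarith
  -- squared-norm as dot product
  have hsq : ∀ {q : ℕ} (v : Fin q → ℝ), ∑ p, v p ^ 2 = v ⬝ᵥ v := by
    intro q v
    simp [dotProduct, sq]
  -- key quadratic expansion
  have hkey : ∀ x, f x = (x - y k) ⬝ᵥ ((M k) *ᵥ (x - y k)) + f (y k) := by
    intro x
    set u := x - y k with hu
    have hx : x = u + y k := by rw [hu]; abel
    have hcross : ∑ i ∈ Finset.range k, u ⬝ᵥ ((Ai i)ᵀ *ᵥ ((Ai i) *ᵥ y k - bi i))
        + lam * (u ⬝ᵥ (T *ᵥ (y k - y0))) = 0 := by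
      have := congrArg (fun w => u ⬝ᵥ w) hne
      simpa [dotProduct_add, aux_dotProduct_sum, dotProduct_smul, smul_eq_mul] using this
    have hL1 : ∀ z : Fin n → ℝ, L *ᵥ (z - y0) = L *ᵥ z - L *ᵥ y0 := fun z =>
      Matrix.mulVec_sub L z y0
    have hquad : u ⬝ᵥ ((M k) *ᵥ u)
        = lam * (u ⬝ᵥ (T *ᵥ u)) + ∑ i ∈ Finset.range k, u ⬝ᵥ (((Ai i)ᵀ * Ai i) *ᵥ u) := by
      rw [hM]
      simp [Matrix.add_mulVec, aux_sum_mulVec, Matrix.smul_mulVec, dotProduct_add,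
        dotProduct_smul, smul_eq_mul, aux_dotProduct_sum]
    have hterm : ∀ i, ∑ p, ((Ai i) *ᵥ x - bi i) p ^ 2
        = u ⬝ᵥ (((Ai i)ᵀ * Ai i) *ᵥ u)
          + 2 * (u ⬝ᵥ ((Ai i)ᵀ *ᵥ ((Ai i) *ᵥ y k - bi i)))
          + ∑ p, ((Ai i) *ᵥ y k - bi i) p ^ 2 := by
      intro i
      rw [hsq, hsq, hx, aux_expand]
    have hLterm : ∑ p, (L *ᵥ (x - y0)) p ^ 2
        = u ⬝ᵥ (T *ᵥ u) + 2 * (u ⬝ᵥ (T *ᵥ (y k - y0)))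
          + ∑ p, (L *ᵥ (y k - y0)) p ^ 2 := by
      have h2 : Lᵀ *ᵥ (L *ᵥ y k - L *ᵥ y0) = (Lᵀ * L) *ᵥ (y k - y0) := by
        rw [← Matrix.mulVec_mulVec, Matrix.mulVec_sub L (y k) y0]
      rw [hsq, hsq]
      simp only [hL1]
      rw [hx, aux_expand, hT, h2]
    rw [hf x, hf (y k), hLterm]
    rw [Finset.sum_congr rfl fun i _ => hterm i]
    rw [hquad]
    simp only [Finset.sum_add_distrib, ← Finset.mul_sum]
    linear_combination (2:ℝ) * hcross
  refine ⟨fun x => ?_, fun x hx => ?_⟩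
  · rw [hkey x]
    have h0 : 0 ≤ (x - y k) ⬝ᵥ ((M k) *ᵥ (x - y k)) := by
      have := (hpd k).posSemidef.dotProduct_mulVec_nonneg (x - y k)
      simpa using this
    linarith
  · have h1 := hx (y k)
    rw [hkey x] at h1
    by_contra hxy
    have hne0 : x - y k ≠ 0 := sub_ne_zero.mpr hxy
    have hpos := (hpd k).dotProduct_mulVec_pos hne0
    simp only [star_trivial] at hpos
    linarith
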